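/- Let a and c be nonzero integers such that −4ac is not a square in ℚ. Then there exist infinitely many primes p such that there are no nonzero integers x, y, z with p x² = a y² + c z². -/

import Mathlib

open NumberTheorySymbols

/-- For an odd squarefree `m > 1`, there is `b ≡ 1 mod 8`, coprime to `m`,
with Jacobi symbol `J(m | b) = -1`. -/
lemma aux_key_m (m : ℕ) (hm_odd : Odd m) (hm1 : m ≠ 1) (hsf : Squarefree m) :
    ∃ b : ℕ, b % 8 = 1 ∧ Nat.Coprime b m ∧ J((m : ℤ) | b) = -1 := by
  have hm0 : m ≠ 0 := hsf.ne_zero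
  have hq : m.minFac.Prime := Nat.minFac_prime hm1
  set q := m.minFac with hq_def
  obtain ⟨m'', hm''⟩ := Nat.minFac_dvd m
  have hq2 : q ≠ 2 := by
    intro h
    have : (2 : ℕ) ∣ m := h ▸ Nat.minFac_dvd m
    rw [Nat.odd_iff] at hm_odd
    omega
  have hm''0 : m'' ≠ 0 := by rintro rfl; simp at hm''; exact hm0 hm''
  have hco : Nat.Coprime q m'' := by
    rw [hq.coprime_iff_not_dvd]
    intro h
    exact hq.not_isUnit (hsf q (by rw [hm'']; exact mul_dvd_mul_left q h))
  haveI : Fact q.Prime := ⟨hq⟩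
  obtain ⟨x, hx⟩ := FiniteField.exists_nonsquare (F := ZMod q)
    (by rw [ZMod.ringChar_zmod_n]; exact hq2)
  have hx0 : x ≠ 0 := fun h => hx (h ▸ ⟨0, by simp⟩)
  have hux : ((x.val : ℕ) : ZMod q) = x := by simp [ZMod.natCast_val, ZMod.cast_id]
  obtain ⟨k, hk1, hk2⟩ := Nat.chineseRemainder hco x.val 1
  have hco8 : Nat.Coprime 8 m := by
    have h2 : Nat.Coprime 2 m := Nat.coprime_two_left.mpr hm_odd
    simpa using h2.pow_left 3
  obtain ⟨b, hb1, hb2⟩ := Nat.chineseRemainder hco8 1 k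
  have hbq : b ≡ x.val [MOD q] := (hb2.of_dvd (Nat.minFac_dvd m)).trans hk1
  have hbm'' : b ≡ 1 [MOD m''] := (hb2.of_dvd ⟨q, by rw [hm'']; ring⟩).trans hk2
  have hb8 : b % 8 = 1 := hb1
  have hqu : Nat.Coprime x.val q := by
    rw [Nat.coprime_comm, hq.coprime_iff_not_dvd]
    intro h
    have h0 : x.val = 0 := Nat.eq_zero_of_dvd_of_lt h (ZMod.val_lt x)
    exact hx0 (by rw [← hux, h0]; simp)
  refine ⟨b, hb8, ?_, ?_⟩
  · rw [hm'']
    refine Nat.Coprime.mul_right ?_ ?_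
    · have h := Nat.ModEq.gcd_eq hbq
      unfold Nat.Coprime
      rw [h]
      exact hqu
    · have h := Nat.ModEq.gcd_eq hbm''
      unfold Nat.Coprime
      rw [h]
      simp
  · have hb4 : b % 4 = 1 := by omega
    rw [jacobiSym.quadratic_reciprocity_one_mod_four' hm_odd hb4]
    haveI : NeZero q := ⟨hq.ne_zero⟩
    haveI : NeZero m'' := ⟨hm''0⟩
    rw [hm'', jacobiSym.mul_right]
    have e1 : J((b : ℤ) | q) = -1 := by
      have hmod : (b : ℤ) % q = (x.val : ℤ) % q := by exact_mod_cast hbq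
      rw [jacobiSym.mod_left' hmod, ← jacobiSym.legendreSym.to_jacobiSym]
      exact (legendreSym.eq_neg_one_iff q).mpr (by rwa [Int.cast_natCast, hux])
    have e2 : J((b : ℤ) | m'') = 1 := by
      have hmod : (b : ℤ) % m'' = (1 : ℤ) % m'' := by exact_mod_cast hbm''
      rw [jacobiSym.mod_left' hmod]
      exact jacobiSym.one_left m''
    rw [e1, e2, mul_one]

/-- For `ε = ±1` and squarefree `t` with `ε * t ≠ 1`, there is an odd `b`
coprime to `8 * t` with `J(ε * t | b) = -1`. -/
lemma aux_exists_b (ε : ℤ) (hε : ε = 1 ∨ ε = -1) (t : ℕ) (hsf : Squarefree t)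
    (hd1 : ε * t ≠ 1) :
    ∃ b : ℕ, b % 2 = 1 ∧ Nat.Coprime b (8 * t) ∧ J(ε * t | b) = -1 := by
  have ht0 : t ≠ 0 := hsf.ne_zero
  rcases Nat.even_or_odd t with hte | hto
  · -- t even : t = 2 * m, m odd
    obtain ⟨m, hm⟩ := hte
    have htm : t = 2 * m := by omega
    have hmodd : Odd m := by
      rcases Nat.even_or_odd m with he | ho
      · exfalso
        obtain ⟨m', hm'⟩ := he
        exact (Nat.Prime.prime Nat.prime_two).not_unit
          (hsf 2 ⟨m', by rw [htm]; omega⟩)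
      · exact ho
    have hsfm : Squarefree m := hsf.squarefree_of_dvd ⟨2, by omega⟩
    by_cases hm1 : m = 1
    · subst hm1
      rcases hε with rfl | rfl
      · refine ⟨5, by norm_num, by rw [htm]; decide, ?_⟩
        have h22 : (1 : ℤ) * ((2 * 1 : ℕ) : ℤ) = 2 := by norm_num
        rw [htm, h22, jacobiSym.at_two (by decide)]
        decide
      · refine ⟨7, by norm_num, by rw [htm]; decide, ?_⟩
        rw [htm]
        have : (-1 : ℤ) * ((2 * 1 : ℕ) : ℤ) = -1 * 2 := by norm_num
        rw [this, jacobiSym.mul_left, jacobiSym.at_neg_one (by decide),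
          jacobiSym.at_two (by decide)]
        decide
    · obtain ⟨b, hb8, hbm, hbJ⟩ := aux_key_m m hmodd hm1 hsfm
      have hbodd : b % 2 = 1 := by omega
      refine ⟨b, hbodd, ?_, ?_⟩
      · have h16 : Nat.Coprime b 16 := by
          have h2 : Nat.Coprime b 2 := Nat.coprime_two_right.mpr (Nat.odd_iff.mpr hbodd)
          simpa using h2.pow_right 4
        have : 8 * t = 16 * m := by rw [htm]; ring
        rw [this]
        exact Nat.Coprime.mul_right h16 hbm
      · have hcast : ε * (t : ℤ) = ε * 2 * m := by rw [htm]; push_cast; ring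
        rw [hcast, jacobiSym.mul_left, jacobiSym.mul_left]
        have hε1 : J(ε | b) = 1 := by
          rcases hε with rfl | rfl
          · exact jacobiSym.one_left b
          · rw [jacobiSym.at_neg_one (Nat.odd_iff.mpr hbodd)]
            exact ZMod.χ₄_nat_one_mod_four (by omega)
        have h2 : J((2 : ℤ) | b) = 1 := by
          rw [jacobiSym.at_two (Nat.odd_iff.mpr hbodd), ZMod.χ₈_nat_mod_eight, hb8]
          decide
        rw [hε1, h2, hbJ]
        ring
  · -- t odd
    by_cases ht1 : t = 1
    · subst ht1
      have hεneg : ε = -1 := by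
        rcases hε with rfl | rfl
        · simp at hd1
        · rfl
      subst hεneg
      refine ⟨3, by norm_num, by decide, ?_⟩
      have : (-1 : ℤ) * ((1 : ℕ) : ℤ) = -1 := by norm_num
      rw [this, jacobiSym.at_neg_one (by decide)]
      decide
    · obtain ⟨b, hb8, hbm, hbJ⟩ := aux_key_m t hto ht1 hsf
      have hbodd : b % 2 = 1 := by omega
      refine ⟨b, hbodd, ?_, ?_⟩
      · have h8 : Nat.Coprime b 8 := by
          have h2 : Nat.Coprime b 2 := Nat.coprime_two_right.mpr (Nat.odd_iff.mpr hbodd)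
          simpa using h2.pow_right 3
        exact Nat.Coprime.mul_right h8 hbm
      · rw [jacobiSym.mul_left]
        have hε1 : J(ε | b) = 1 := by
          rcases hε with rfl | rfl
          · exact jacobiSym.one_left b
          · rw [jacobiSym.at_neg_one (Nat.odd_iff.mpr hbodd)]
            exact ZMod.χ₄_nat_one_mod_four (by omega)
        rw [hε1, hbJ]
        ring

/-- A nonsquare integer is a quadratic nonresidue modulo infinitely many primes. -/
lemma aux_infinite_nonsquare (n : ℤ) (hn : ¬ IsSquare n) :
    {p : ℕ | p.Prime ∧ ¬ IsSquare ((n : ZMod p))}.Infinite := by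
  have hn0 : n ≠ 0 := fun h => hn (h ▸ ⟨0, by ring⟩)
  obtain ⟨t, s, hts, hsf⟩ := Nat.sq_mul_squarefree n.natAbs
  have hs0 : s ≠ 0 := by
    rintro rfl
    simp at hts
    exact hn0 (Int.natAbs_eq_zero.mp hts.symm)
  obtain ⟨ε, hε, hn_eq⟩ : ∃ ε : ℤ, (ε = 1 ∨ ε = -1) ∧ n = (s : ℤ) ^ 2 * (ε * t) := by
    have h1 : ((s : ℤ)) ^ 2 * (t : ℤ) = (n.natAbs : ℤ) := by exact_mod_cast hts
    by_cases h : 0 ≤ n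
    · have h2 : (n.natAbs : ℤ) = n := Int.natAbs_of_nonneg h
      exact ⟨1, Or.inl rfl, by linarith [h1, h2]⟩
    · have h2 : (n.natAbs : ℤ) = -n := by
        rw [Int.ofNat_natAbs_of_nonpos (by omega)]
      exact ⟨-1, Or.inr rfl, by linarith [h1, h2]⟩
  have ht0 : t ≠ 0 := hsf.ne_zero
  have hd1 : ε * t ≠ 1 := by
    intro h
    exact hn ⟨s, by rw [hn_eq, h, mul_one]; ring⟩
  obtain ⟨b, hb2, hbc, hbJ⟩ := aux_exists_b ε hε t hsf hd1
  rw [Set.infinite_iff_exists_gt]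
  intro N
  haveI : NeZero (8 * t) := ⟨by positivity⟩
  have hunit : IsUnit ((b : ZMod (8 * t))) := (ZMod.isUnit_iff_coprime b (8 * t)).mpr hbc
  obtain ⟨p, hpN, hpp, hpb⟩ := Nat.forall_exists_prime_gt_and_eq_mod hunit (max N s)
  have hmod : p ≡ b [MOD 8 * t] := (ZMod.natCast_eq_natCast_iff p b _).mp hpb
  have hp_odd : Odd p := by
    have h2 : p ≡ b [MOD 2] := hmod.of_dvd ⟨4 * t, by ring⟩
    have : p % 2 = b % 2 := h2
    rw [Nat.odd_iff]
    omega
  have hb_odd : Odd b := Nat.odd_iff.mpr hb2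
  have hmod4 : p % (4 * t) = b % (4 * t) := hmod.of_dvd ⟨2, by ring⟩
  have habs : (ε * t).natAbs = t := by
    rcases hε with rfl | rfl <;> simp
  have hJd : J(ε * t | p) = -1 := by
    have h1 := jacobiSym.mod_right (ε * t) hp_odd
    have h2 := jacobiSym.mod_right (ε * t) hb_odd
    rw [habs] at h1 h2
    rw [h1, hmod4, ← h2]
    exact hbJ
  have hsp : Int.gcd ((s : ℤ)) p = 1 := by
    have : Nat.Coprime s p := by
      rw [Nat.coprime_comm, (hpp.coprime_iff_not_dvd)]
      intro h
      have := Nat.le_of_dvd (Nat.pos_of_ne_zero hs0) h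
      have hps : s < p := lt_of_le_of_lt (le_max_right N s) hpN
      omega
    simpa [Int.gcd] using this
  have hJn : J(n | p) = -1 := by
    rw [hn_eq, jacobiSym.mul_left, jacobiSym.sq_one' hsp, hJd, one_mul]
  exact ⟨p, ⟨hpp, ZMod.nonsquare_of_jacobiSym_eq_neg_one hJn⟩,
    lt_of_le_of_lt (le_max_left N s) hpN⟩

/-- Descent: if `-(a*c)` is a nonresidue mod a prime `p`, the equation
`p x² = a y² + c z²` has no solution with `z ≠ 0`. -/
lemma aux_descent (a c : ℤ) (p : ℕ) (pp : p.Prime)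
    (hns : ¬ IsSquare ((-(a * c) : ℤ) : ZMod p)) :
    ∀ x y z : ℤ, z ≠ 0 → (p : ℤ) * x ^ 2 = a * y ^ 2 + c * z ^ 2 → False := by
  haveI : Fact p.Prime := ⟨pp⟩
  have ha0 : ((a : ZMod p)) ≠ 0 := by
    intro h
    apply hns
    have : ((-(a * c) : ℤ) : ZMod p) = 0 := by push_cast [h]; ring
    rw [this]
    exact ⟨0, by ring⟩
  suffices H : ∀ N : ℕ, ∀ x y z : ℤ, z ≠ 0 → z.natAbs ≤ N →
      (p : ℤ) * x ^ 2 = a * y ^ 2 + c * z ^ 2 → False by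
    intro x y z hz heq
    exact H z.natAbs x y z hz le_rfl heq
  intro N
  induction N with
  | zero =>
    intro x y z hz hle _
    exact hz (Int.natAbs_eq_zero.mp (Nat.le_zero.mp hle))
  | succ N ih =>
    intro x y z hz hle heq
    have e : (a : ZMod p) * (y : ZMod p) ^ 2 + (c : ZMod p) * (z : ZMod p) ^ 2 = 0 := by
      have h2 := congrArg (fun t : ℤ => ((t : ZMod p))) heq
      push_cast at h2
      rw [ZMod.natCast_self] at h2
      simpa using h2.symm
    by_cases hzp : ((z : ZMod p)) = 0
    · -- p ∣ z, then p ∣ y, then p ∣ x ; descend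
      have hyp : ((y : ZMod p)) = 0 := by
        have : (a : ZMod p) * (y : ZMod p) ^ 2 = 0 := by
          rw [hzp] at e; simpa using e
        rcases mul_eq_zero.mp this with h | h
        · exact absurd h ha0
        · exact pow_eq_zero_iff (n := 2) (by norm_num) |>.mp h
      obtain ⟨z₁, rfl⟩ := (ZMod.intCast_zmod_eq_zero_iff_dvd z p).mp hzp
      obtain ⟨y₁, rfl⟩ := (ZMod.intCast_zmod_eq_zero_iff_dvd y p).mp hyp
      have hp0 : (p : ℤ) ≠ 0 := by exact_mod_cast pp.ne_zero
      have heq2 : x ^ 2 = (p : ℤ) * (a * y₁ ^ 2 + c * z₁ ^ 2) := by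
        have : (p : ℤ) * x ^ 2 = (p : ℤ) * ((p : ℤ) * (a * y₁ ^ 2 + c * z₁ ^ 2)) := by
          rw [heq]; ring
        exact mul_left_cancel₀ hp0 this
      have hpx : (p : ℤ) ∣ x := by
        have : (p : ℤ) ∣ x ^ 2 := ⟨a * y₁ ^ 2 + c * z₁ ^ 2, heq2⟩
        exact (Int.Prime.dvd_pow' (by exact_mod_cast pp) this)
      obtain ⟨x₁, rfl⟩ := hpx
      have heq3 : (p : ℤ) * x₁ ^ 2 = a * y₁ ^ 2 + c * z₁ ^ 2 := by
        have h4 : (p : ℤ) * ((p : ℤ) * x₁ ^ 2) = (p : ℤ) * (a * y₁ ^ 2 + c * z₁ ^ 2) := by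
          have := heq2
          nlinarith [heq2]
        exact mul_left_cancel₀ hp0 h4
      have hz₁ : z₁ ≠ 0 := by
        rintro rfl
        simp at hz
      have hlt : z₁.natAbs ≤ N := by
        have h2le : 2 ≤ p := pp.two_le
        have : ((p : ℤ) * z₁).natAbs = p * z₁.natAbs := by
          rw [Int.natAbs_mul]; simp
        have hz1pos : 1 ≤ z₁.natAbs := Nat.pos_of_ne_zero (Int.natAbs_ne_zero.mpr hz₁)
        rw [this] at hle
        nlinarith
      exact ih x₁ y₁ z₁ hz₁ hlt heq3
    · -- z invertible mod p : -(a*c) is a square, contradiction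
      apply hns
      refine ⟨(a : ZMod p) * (y : ZMod p) * ((z : ZMod p))⁻¹, ?_⟩
      have hzi : (z : ZMod p) * ((z : ZMod p))⁻¹ = 1 := ZMod.mul_inv_of_unit _
        (Ne.isUnit hzp)
      have hcast : ((-(a * c) : ℤ) : ZMod p) = -((a : ZMod p) * (c : ZMod p)) := by
        push_cast; ring
      rw [hcast]
      field_simp
      linear_combination (-1 : ZMod p) * e

theorem stmt7 (a c : ℤ) (ha : a ≠ 0) (hc : c ≠ 0)
    (hns : ¬ ∃ q : ℚ, q ^ 2 = ((-4 * a * c : ℤ) : ℚ)) :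
    {p : ℕ | p.Prime ∧ ¬ ∃ x y z : ℤ, x ≠ 0 ∧ y ≠ 0 ∧ z ≠ 0 ∧
      (p : ℤ) * x ^ 2 = a * y ^ 2 + c * z ^ 2}.Infinite := by
  have hnsq : ¬ IsSquare (-(a * c) : ℤ) := by
    rintro ⟨k, hk⟩
    apply hns
    refine ⟨((2 * k : ℤ) : ℚ), ?_⟩
    have h4 : ((-4) * a * c : ℤ) = (2 * k) ^ 2 := by linear_combination 4 * hk
    rw [h4]
    push_cast
    ring
  have hinf := aux_infinite_nonsquare (-(a * c)) hnsq
  apply Set.Infinite.mono _ hinf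
  intro p hp
  obtain ⟨hpp, hpns⟩ := hp
  refine ⟨hpp, ?_⟩
  rintro ⟨x, y, z, _, _, hz, heq⟩
  exact aux_descent a c p hpp hpns x y z hz heq
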